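/- Let C be a triangulated category, let R and S be full subcategories of C, and let W' be the class of morphisms w such that in any triangle Z --r--> X --w--> Y --s--> ΣZ, the morphism r factors through R^⊥ and s factors through S^⊥. If f : X → Y and g : Y → Z both belong to W', then the composite g ∘ f belongs to W'. (One may assume R and S are contravariantly finite and extension-closed.) -/

import Mathlib

open CategoryTheory CategoryTheory.Limits CategoryTheory.Pretriangulated

variable {C : Type*} [Category C] [Preadditive C] [HasZeroObject C]
  [HasShift C ℤ] [∀ n : ℤ, Functor.Additive (CategoryTheory.shiftFunctor C n)]
  [Pretriangulated C]

/-- `f` factors through an object of the set `S`. -/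
def FactorsThruSet (S : Set C) {X Y : C} (f : X ⟶ Y) : Prop :=
  ∃ U ∈ S, ∃ (a : X ⟶ U) (b : U ⟶ Y), f = a ≫ b

/-- The right perpendicular subcategory `T^⊥` of a full subcategory `T`. -/
def rperp (T : Set C) : Set C := {Z | ∀ T' ∈ T, ∀ (f : T' ⟶ Z), f = 0}
/-- The class `W'` determined by a pair of subcategories `R`, `S`. -/
def W'class (R S : Set C) {X Y : C} (w : X ⟶ Y) : Prop :=
  ∀ (Z : C) (r : Z ⟶ X) (s : Y ⟶ Z⟦(1:ℤ)⟧),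
    (Triangle.mk r w s ∈ distTriang C) →
      FactorsThruSet (rperp R) r ∧ FactorsThruSet (rperp S) s

/-- A subcategory is contravariantly finite if every object admits a right approximation. -/
def ContravariantlyFinite (T : Set C) : Prop :=
  ∀ X : C, ∃ T₀ ∈ T, ∃ (p : T₀ ⟶ X), ∀ T' ∈ T, ∀ (u : T' ⟶ X), ∃ v : T' ⟶ T₀, v ≫ p = u

/-- A subcategory is extension-closed if it is stable under extensions in triangles. -/
def ExtensionClosed (T : Set C) : Prop :=
  ∀ (X Y Z : C) (a : X ⟶ Y) (b : Y ⟶ Z) (c : Z ⟶ X⟦(1:ℤ)⟧),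
    (Triangle.mk a b c ∈ distTriang C) → X ∈ T → Z ∈ T → Y ∈ T

/-- The class `W'` is closed under composition. -/
theorem W'class_comp (R S : Set C)
    (hRcf : ContravariantlyFinite R) (hRec : ExtensionClosed R)
    (hScf : ContravariantlyFinite S) (hSec : ExtensionClosed S)
    {X Y Z : C} (f : X ⟶ Y) (g : Y ⟶ Z)
    (hf : W'class R S f) (hg : W'class R S g) :
    W'class R S (f ≫ g) := by
  intro Z₀ r s hT
  -- complete `f` and `g` to distinguished triangles
  obtain ⟨Z₁, r₁, s₁, hF⟩ := distinguished_cocone_triangle₁ f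
  obtain ⟨Z₂, r₂, s₂, hG'⟩ := distinguished_cocone_triangle₁ g
  obtain ⟨⟨U₁, hU₁, a₁, b₁, hr₁⟩, ⟨V₁, hV₁, c₁, d₁, hs₁⟩⟩ := hf Z₁ r₁ s₁ hF
  obtain ⟨⟨U₂, hU₂, a₂, b₂, hr₂⟩, ⟨V₂, hV₂, c₂, d₂, hs₂⟩⟩ := hg Z₂ r₂ s₂ hG'
  -- fill morphisms of triangles
  obtain ⟨ψ, hψ⟩ : ∃ ψ : Z₀ ⟶ Z₂, r ≫ f = ψ ≫ r₂ := by
    obtain ⟨ψ, hψ₁, _⟩ := complete_distinguished_triangle_morphism₁ _ _ hT hG' f (𝟙 Z)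
      (by exact Category.comp_id _)
    exact ⟨ψ, hψ₁⟩
  obtain ⟨a, ha⟩ : ∃ a : Z₁ ⟶ Z₀, s₁ ≫ a⟦(1:ℤ)⟧' = g ≫ s := by
    obtain ⟨a, _, ha₃⟩ := complete_distinguished_triangle_morphism₁ _ _ hF hT (𝟙 X) g
      (by exact (Category.id_comp _).symm)
    exact ⟨a, ha₃⟩
  constructor
  · -- the `r` part
    obtain ⟨P, π, τ, hP⟩ := distinguished_cocone_triangle₁ (ψ ≫ a₂)
    have hπρ : (π ≫ ψ) ≫ a₂ = 0 := by
      rw [Category.assoc]; exact comp_distTriang_mor_zero₁₂ _ hP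
    have h1 : (π ≫ r) ≫ f = 0 := by
      rw [Category.assoc, hψ, hr₂, ← Category.assoc, ← Category.assoc, hπρ, zero_comp]
    obtain ⟨c, hc⟩ : ∃ c : P ⟶ Z₁, π ≫ r = c ≫ r₁ := by
      obtain ⟨c, hc⟩ := Triangle.coyoneda_exact₂ _ hF (π ≫ r) h1
      exact ⟨c, hc⟩
    obtain ⟨E, ι, σ, hE⟩ := distinguished_cocone_triangle₂ (τ ≫ (c ≫ a₁)⟦(1:ℤ)⟧')
    obtain ⟨ε, hε₁, hε₂⟩ : ∃ ε : Z₀ ⟶ E, π ≫ ε = (c ≫ a₁) ≫ ι ∧ ε ≫ σ = ψ ≫ a₂ := by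
      obtain ⟨ε, hε₁, hε₂⟩ := complete_distinguished_triangle_morphism₂ _ _ hP hE
        (c ≫ a₁) (𝟙 U₂) (by exact (Category.id_comp _).symm)
      refine ⟨ε, hε₁, ?_⟩
      exact hε₂.symm.trans (Category.comp_id (ψ ≫ a₂))
    -- extend `b₁` along `ι`, using the inverse rotations
    have h0 : (Triangle.mk π (ψ ≫ a₂) τ).invRotate.mor₁ ≫ π = 0 := by
      exact comp_distTriang_mor_zero₁₂ _ (inv_rot_of_distTriang _ hP)
    have hm : (Triangle.mk ι σ (τ ≫ (c ≫ a₁)⟦(1:ℤ)⟧')).invRotate.mor₁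
        = (Triangle.mk π (ψ ≫ a₂) τ).invRotate.mor₁ ≫ (c ≫ a₁) := by
      have nat := (shiftFunctorCompIsoId C (1:ℤ) (-1:ℤ) (by omega)).hom.naturality (c ≫ a₁)
      dsimp at nat
      simp only [Functor.map_comp, Category.assoc] at nat
      dsimp [Triangle.invRotate]
      change -(shiftFunctor C (-1)).map (τ ≫ (c ≫ a₁)⟦(1:ℤ)⟧') ≫ (shiftFunctorCompIsoId C (1:ℤ) (-1:ℤ) (by omega)).hom.app U₁ = (-(shiftFunctor C (-1)).map τ ≫ (shiftFunctorCompIsoId C (1:ℤ) (-1:ℤ) (by omega)).hom.app P) ≫ c ≫ a₁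
      simp only [Functor.map_comp, Preadditive.neg_comp, Category.assoc, neg_inj]
      rw [nat]
    have hobs : (Triangle.mk ι σ (τ ≫ (c ≫ a₁)⟦(1:ℤ)⟧')).invRotate.mor₁ ≫ b₁ = 0 := by
      erw [hm, Category.assoc, Category.assoc, ← hr₁, ← hc, ← Category.assoc, h0, zero_comp]
    obtain ⟨lam, hlam⟩ : ∃ lam : E ⟶ X, b₁ = ι ≫ lam := by
      obtain ⟨l, hl⟩ := Triangle.yoneda_exact₂ _ (inv_rot_of_distTriang _ hE) b₁ hobs
      exact ⟨l, hl⟩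
    have hπd : π ≫ (r - ε ≫ lam) = 0 := by
      rw [Preadditive.comp_sub, hc, ← Category.assoc, hε₁, Category.assoc, ← hlam,
        Category.assoc, ← hr₁, sub_self]
    obtain ⟨dt, hdt⟩ : ∃ dt : U₂ ⟶ X, r - ε ≫ lam = (ψ ≫ a₂) ≫ dt := by
      obtain ⟨d, hd⟩ := Triangle.yoneda_exact₂ _ hP (r - ε ≫ lam) hπd
      exact ⟨d, hd⟩
    refine ⟨E, ?_, ε, lam + σ ≫ dt, ?_⟩
    · intro T' hT' φ
      have h2 : φ ≫ σ = 0 := hU₂ T' hT' (φ ≫ σ)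
      obtain ⟨φ', hφ'⟩ := Triangle.coyoneda_exact₂ _ hE φ h2
      erw [hφ', hU₁ T' hT' φ', zero_comp]; rfl
    · rw [Preadditive.comp_add, ← Category.assoc, hε₂, ← hdt]
      abel
  · -- the `s` part
    have hgs : g ≫ s = c₁ ≫ (d₁ ≫ a⟦(1:ℤ)⟧') := by
      rw [← ha, hs₁, Category.assoc]
    obtain ⟨Q, π', τ', hQ⟩ := distinguished_cocone_triangle (d₁ ≫ a⟦(1:ℤ)⟧')
    have hκπ : (d₁ ≫ a⟦(1:ℤ)⟧') ≫ π' = 0 := comp_distTriang_mor_zero₁₂ _ hQ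
    have hπτ : π' ≫ τ' = 0 := comp_distTriang_mor_zero₂₃ _ hQ
    have h1 : g ≫ (s ≫ π') = 0 := by
      rw [← Category.assoc, hgs, Category.assoc, hκπ, comp_zero]
    obtain ⟨e', he'⟩ : ∃ e' : Z₂⟦(1:ℤ)⟧ ⟶ Q, s ≫ π' = s₂ ≫ e' := by
      obtain ⟨e', he'⟩ := Triangle.yoneda_exact₂ _ (rot_of_distTriang _ hG') (s ≫ π') h1
      exact ⟨e', he'⟩
    obtain ⟨E', ι', σ', hE'⟩ := distinguished_cocone_triangle₂ ((d₂ ≫ e') ≫ τ')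
    obtain ⟨ε', hε'₁, hε'₂⟩ : ∃ ε' : E' ⟶ Z₀⟦(1:ℤ)⟧,
        ι' ≫ ε' = d₁ ≫ a⟦(1:ℤ)⟧' ∧ ε' ≫ π' = σ' ≫ (d₂ ≫ e') := by
      obtain ⟨ε', hε'₁, hε'₂⟩ := complete_distinguished_triangle_morphism₂ _ _ hE' hQ
        (𝟙 V₁) (d₂ ≫ e') (by exact (congrArg (fun k => ((d₂ ≫ e') ≫ τ') ≫ k) ((shiftFunctor C (1:ℤ)).map_id V₁)).trans (Category.comp_id _))
      refine ⟨ε', ?_, hε'₂.symm⟩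
      exact hε'₁.trans (Category.id_comp _)
    have h2 : c₂ ≫ ((d₂ ≫ e') ≫ τ') = 0 := by
      rw [← Category.assoc, ← Category.assoc, ← hs₂, ← he', Category.assoc, hπτ,
        comp_zero]
    obtain ⟨lam', hlam'⟩ : ∃ lam' : Z ⟶ E', c₂ = lam' ≫ σ' := by
      obtain ⟨l, hl⟩ := Triangle.coyoneda_exact₃ _ hE' c₂ h2
      exact ⟨l, hl⟩
    have hd' : (s - lam' ≫ ε') ≫ π' = 0 := by
      rw [Preadditive.sub_comp, Category.assoc, hε'₂, he', hs₂, ← Category.assoc,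
        ← hlam', Category.assoc, sub_self]
    obtain ⟨dh, hdh⟩ : ∃ dh : Z ⟶ V₁, s - lam' ≫ ε' = dh ≫ (d₁ ≫ a⟦(1:ℤ)⟧') := by
      obtain ⟨d, hd⟩ := Triangle.coyoneda_exact₂ _ hQ (s - lam' ≫ ε') hd'
      exact ⟨d, hd⟩
    refine ⟨E', ?_, lam' + dh ≫ ι', ε', ?_⟩
    · intro T' hT' φ
      have h3 : φ ≫ σ' = 0 := hV₂ T' hT' (φ ≫ σ')
      obtain ⟨φ', hφ'⟩ := Triangle.coyoneda_exact₂ _ hE' φ h3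
      erw [hφ', hV₁ T' hT' φ', zero_comp]; rfl
    · rw [Preadditive.add_comp, Category.assoc, hε'₁, ← hdh]
      abel
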